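/- (Definition (2.5) agrees with Euler's coefficient formula) For every k ∈ ℕ and every complex x with 0 < |x| < 1, the series ∑_{γ=1}^{∞} γ^{k+1} x^γ converges absolutely and ((1 − x)^{k+2}/x) · ∑_{γ=1}^{∞} γ^{k+1} x^γ = E_k(x); that is, the function E_k(x) = ((1−x)^{k+2}/x) (x d/dx)^k (x/(1−x)²) is the polynomial whose coefficients are given by Euler's formula a_s = ∑_{j=0}^{s} (−1)^j C(k+2, j) (s+1−j)^{k+1}. -/

import Mathlib

open Finset
open scoped fwdDiff

noncomputable section

/-- Euler's formula for the coefficients of the Euler–Frobenius polynomial `E_k`. -/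
def efCoeff (k s : ℕ) : ℤ :=
  ∑ j ∈ Finset.range (s + 1),
    (-1) ^ j * ((k + 2).choose j : ℤ) * ((s + 1 - j : ℕ) : ℤ) ^ (k + 1)

/-- Evaluation of the Euler–Frobenius polynomial `E_k` at a complex point. -/
def efEvalC (k : ℕ) (x : ℂ) : ℂ :=
  ∑ s ∈ Finset.range (k + 1), (efCoeff k s : ℂ) * x ^ s

lemma fwdDiff_iter_zero_fun (m : ℕ) :
    (Δ_[(1:ℕ)])^[m] (fun _ : ℕ => (0 : ℂ)) = fun _ => 0 := by
  induction m with
  | zero => rfl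
  | succ m ih => rw [Function.iterate_succ_apply, fwdDiff_const, ih]

lemma fwdDiff_iter_pow_eq_zero :
    ∀ d m : ℕ, (Δ_[(1:ℕ)])^[d + 1 + m] (fun t : ℕ => (t : ℂ) ^ d) = fun _ => 0 := by
  intro d
  induction d using Nat.strong_induction_on with
  | _ d ih =>
    intro m
    match d with
    | 0 =>
      rw [show 0 + 1 + m = m + 1 by ring, Function.iterate_succ_apply]
      simp only [pow_zero]
      rw [fwdDiff_const]
      exact fwdDiff_iter_zero_fun m
    | d + 1 =>
      rw [show d + 1 + 1 + m = (d + 1 + m) + 1 by ring, Function.iterate_succ_apply]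
      have h1 : Δ_[(1:ℕ)] (fun t : ℕ => (t : ℂ) ^ (d + 1))
          = ∑ i ∈ range (d + 1), (((d + 1).choose i : ℂ) • fun s : ℕ => (s : ℂ) ^ i) := by
        funext t
        simp only [fwdDiff, Finset.sum_apply, Pi.smul_apply, smul_eq_mul]
        push_cast
        rw [add_pow, Finset.sum_range_succ]
        simp only [Nat.choose_self, Nat.cast_one, one_pow, mul_one, Nat.sub_self, pow_zero]
        rw [add_sub_cancel_right]
        exact Finset.sum_congr rfl fun i _ => by ring
      rw [h1, fwdDiff_iter_finset_sum]
      funext t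
      simp only [Finset.sum_apply]
      apply Finset.sum_eq_zero
      intro i hi
      rw [fwdDiff_iter_const_smul]
      have hi' : i < d + 1 := mem_range.mp hi
      rw [show d + 1 + m = i + 1 + (d - i + m) by omega, ih i (by omega) (d - i + m)]
      simp

lemma keyB (k n : ℕ) (hn : k + 2 ≤ n) :
    ∑ j ∈ range (k + 3),
      (-1 : ℂ) ^ j * ((k + 2).choose j : ℂ) * ((n - j : ℕ) : ℂ) ^ (k + 1) = 0 := by
  have h0 : (Δ_[(1:ℕ)])^[k + 2] (fun t : ℕ => (t : ℂ) ^ (k + 1)) = fun _ => 0 :=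
    fwdDiff_iter_pow_eq_zero (k + 1) 0
  have h1 := fwdDiff_iter_eq_sum_shift (1 : ℕ) (fun t : ℕ => (t : ℂ) ^ (k + 1)) (k + 2)
    (n - (k + 2))
  rw [h0] at h1
  simp only at h1
  rw [← Finset.sum_range_reflect, h1]
  apply Finset.sum_congr rfl
  intro i hi
  have hi' : i ≤ k + 2 := by have := mem_range.mp hi; omega
  have e1 : k + 3 - 1 - i = k + 2 - i := by omega
  have e2 : n - (k + 2 - i) = n - (k + 2) + i • 1 := by
    simp only [smul_eq_mul, mul_one]; omega
  rw [e1, e2, Nat.choose_symm hi', zsmul_eq_mul]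
  push_cast
  ring

theorem efEval_eq_generating_function (k : ℕ) (x : ℂ)
    (hx0 : 0 < ‖x‖) (hx1 : ‖x‖ < 1) :
    Summable (fun γ : ℕ => ‖(γ : ℂ) ^ (k + 1) * x ^ γ‖) ∧
    (1 - x) ^ (k + 2) / x * ∑' γ : ℕ, (γ : ℂ) ^ (k + 1) * x ^ γ = efEvalC k x := by
  have hx : ‖x‖ < 1 := by exact hx1
  have hxne : x ≠ 0 := by
    intro h; rw [h] at hx0; simp at hx0
  set f : ℕ → ℂ := fun γ => (γ : ℂ) ^ (k + 1) * x ^ γ with hfdef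
  have hf : Summable f := summable_pow_mul_geometric_of_norm_lt_one (k + 1) hx
  have hnorm : Summable (fun γ : ℕ => ‖f γ‖) := by
    have hs : Summable (fun n : ℕ => (n : ℝ) ^ (k + 1) * ‖x‖ ^ n) :=
      summable_pow_mul_geometric_of_norm_lt_one (k + 1) (by rwa [Real.norm_eq_abs, abs_norm])
    refine hs.congr fun γ => ?_
    simp [hfdef, norm_mul, norm_pow]
  refine ⟨hnorm, ?_⟩
  set T := ∑' γ : ℕ, f γ with hT
  set c : ℕ → ℂ := fun j => (-1 : ℂ) ^ j * ((k + 2).choose j : ℂ) with hc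
  set H : ℕ → ℕ → ℂ :=
    fun j n => if j ≤ n then c j * ((n - j : ℕ) : ℂ) ^ (k + 1) * x ^ n else 0 with hHdef
  have hcomp : ∀ j γ, H j (γ + j) = (c j * x ^ j) * f γ := by
    intro j γ
    simp only [hHdef, hfdef]
    rw [if_pos (Nat.le_add_left j γ), Nat.add_sub_cancel, pow_add]
    ring
  have hinj : ∀ j : ℕ, Function.Injective (fun γ : ℕ => γ + j) :=
    fun j => add_left_injective j
  have hsupp : ∀ j : ℕ, Function.support (H j) ⊆ Set.range (fun γ : ℕ => γ + j) := by
    intro j n hn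
    by_contra hr
    apply hn
    simp only [hHdef]
    rw [if_neg]
    intro hle
    exact hr ⟨n - j, by simpa using Nat.sub_add_cancel hle⟩
  have hHs : ∀ j, Summable (H j) := by
    intro j
    rw [← Function.Injective.summable_iff (hinj j)
      (fun n hn => Function.notMem_support.mp (fun h => hn (hsupp j h)))]
    exact (hf.mul_left (c j * x ^ j)).congr fun γ => (hcomp j γ).symm
  have htsum : ∀ j, ∑' n, H j n = c j * x ^ j * T := by
    intro j
    rw [← Function.Injective.tsum_eq (hinj j) (hsupp j)]
    calc ∑' γ, H j (γ + j) = ∑' γ, (c j * x ^ j) * f γ := by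
          exact tsum_congr (hcomp j)
      _ = c j * x ^ j * T := by rw [tsum_mul_left]
  have hbin : (1 - x) ^ (k + 2) = ∑ j ∈ range (k + 3), c j * x ^ j := by
    rw [sub_eq_add_neg, add_comm, add_pow]
    refine Finset.sum_congr rfl fun j _ => ?_
    rw [neg_pow, one_pow, hc]
    ring
  have hGzero : ∀ n ∉ range (k + 2), (∑ j ∈ range (k + 3), H j n) = 0 := by
    intro n hn
    have hn' : k + 2 ≤ n := by
      by_contra h; exact hn (mem_range.mpr (by omega))
    have heq : ∀ j ∈ range (k + 3),
        H j n = (-1 : ℂ) ^ j * ((k + 2).choose j : ℂ) * ((n - j : ℕ) : ℂ) ^ (k + 1) * x ^ n := by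
      intro j hj
      have : j ≤ n := by have := mem_range.mp hj; omega
      simp only [hHdef, hc]
      rw [if_pos this]
    rw [Finset.sum_congr rfl heq, ← Finset.sum_mul, keyB k n hn', zero_mul]
  have hfin : ∑ n ∈ range (k + 2), (∑ j ∈ range (k + 3), H j n) = x * efEvalC k x := by
    rw [Finset.sum_range_succ']
    have g0 : ∑ j ∈ range (k + 3), H j 0 = 0 := by
      apply Finset.sum_eq_zero
      intro j _
      simp only [hHdef]
      rcases Nat.eq_zero_or_pos j with h | h
      · subst h; simp
      · rw [if_neg (by omega)]
    rw [g0, add_zero]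
    have gs : ∀ s ∈ range (k + 1),
        ∑ j ∈ range (k + 3), H j (s + 1) = (efCoeff k s : ℂ) * x ^ (s + 1) := by
      intro s hs
      have hs' : s < k + 1 := mem_range.mp hs
      rw [← Finset.sum_subset (Finset.range_subset_range.mpr (by omega : s + 2 ≤ k + 3))
        (fun j _ hj2 => by
          simp only [hHdef]
          rw [if_neg]
          have := mem_range.not.mp hj2
          omega)]
      rw [Finset.sum_range_succ]
      have hlast : H (s + 1) (s + 1) = 0 := by
        simp only [hHdef]
        rw [if_pos le_rfl]
        simp
      rw [hlast, add_zero]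
      have heq : ∀ j ∈ range (s + 1),
          H j (s + 1)
            = ((-1 : ℂ) ^ j * ((k + 2).choose j : ℂ) * ((s + 1 - j : ℕ) : ℂ) ^ (k + 1))
              * x ^ (s + 1) := by
        intro j hj
        have : j ≤ s + 1 := by have := mem_range.mp hj; omega
        simp only [hHdef, hc]
        rw [if_pos this]
      rw [Finset.sum_congr rfl heq, ← Finset.sum_mul]
      congr 1
      rw [efCoeff]
      push_cast
      rfl
    rw [Finset.sum_congr rfl gs, efEvalC, Finset.mul_sum]
    exact Finset.sum_congr rfl fun s _ => by ring
  have main : (1 - x) ^ (k + 2) * T = x * efEvalC k x := by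
    rw [hbin, Finset.sum_mul]
    have : ∑ j ∈ range (k + 3), c j * x ^ j * T = ∑ j ∈ range (k + 3), ∑' n, H j n :=
      Finset.sum_congr rfl fun j _ => (htsum j).symm
    rw [this, ← Summable.tsum_finsetSum (fun j _ => hHs j), tsum_eq_sum hGzero, hfin]
  rw [div_mul_eq_mul_div, main, mul_div_cancel_left₀ _ hxne]
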